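/- Let r ≤ 1 be an odd integer coprime with 5, and let p be an odd prime with p ≡ 2r (mod 5) and p ≥ (5-r)/2. Then Σ_{k=0}^{(3p-r)/5} (10k+r) · ((r/5)_k)⁵/((1)_k)⁵ · ( Σ_{j=0}^{k-1} 1/(r/5+j)⁴ - Σ_{j=1}^{k} 1/j⁴ ) ≡ 0 (mod p) in ℤ_p. -/

import Mathlib

open Finset

section Aux

variable {p : ℕ} [Fact p.Prime]

private lemma aux_unit (a : PadicInt p) (h : PadicInt.toZMod a ≠ 0) : IsUnit a := by
  rw [PadicInt.isUnit_iff]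
  rcases eq_or_lt_of_le (PadicInt.norm_le_one a) with h1 | h1
  · exact h1
  · exfalso
    obtain ⟨c, rfl⟩ := (PadicInt.norm_lt_one_iff_dvd a).mp h1
    simp at h

private lemma aux_map_inverse (a : PadicInt p) (h : PadicInt.toZMod a ≠ 0) :
    PadicInt.toZMod (Ring.inverse a) = (PadicInt.toZMod a)⁻¹ := by
  obtain ⟨u, rfl⟩ := aux_unit a h
  rw [Ring.inverse_unit]
  refine eq_inv_of_mul_eq_one_left ?_
  rw [← map_mul]
  simp

private lemma aux_eval_map (x : PadicInt p) (k : ℕ) :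
    PadicInt.toZMod ((ascPochhammer (PadicInt p) k).eval x)
      = (ascPochhammer (ZMod p) k).eval (PadicInt.toZMod x) := by
  rw [← ascPochhammer_map (PadicInt.toZMod : PadicInt p →+* ZMod p) k,
    Polynomial.eval_map, Polynomial.eval₂_at_apply]

private lemma aux_dvd_iff (a : PadicInt p) :
    (p : PadicInt p) ∣ a ↔ PadicInt.toZMod a = 0 := by
  constructor
  · rintro ⟨c, rfl⟩; simp
  · intro h
    have hm : a ∈ RingHom.ker (PadicInt.toZMod : PadicInt p →+* ZMod p) := h
    rw [PadicInt.ker_toZMod, PadicInt.maximalIdeal_eq_span_p,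
      Ideal.mem_span_singleton] at hm
    exact hm

private lemma aux_zmod_sum (hp2 : p ≠ 2) (n : ℕ) (hne : Even n) :
    ∑ k ∈ range (n+1),
      (10 * (k : ZMod p) - 5 * n) * ((-1)^k * (n.choose k : ZMod p))^5 *
      ((∑ j ∈ Ioc (n-k) n, ((j : ZMod p))⁻¹^4) - ∑ j ∈ Ioc 0 k, ((j : ZMod p))⁻¹^4) = 0 := by
  set F := ZMod p
  set f : ℕ → F := fun k =>
      (10 * (k : F) - 5 * n) * ((-1)^k * (n.choose k : F))^5 *
      ((∑ j ∈ Ioc (n-k) n, ((j : F))⁻¹^4) - ∑ j ∈ Ioc 0 k, ((j : F))⁻¹^4) with hf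
  have hrefl : ∀ k, k ≤ n → f (n - k) = - f k := by
    intro k hk
    have hsign : (-1 : F)^(n-k) = (-1)^k := by
      have h1 : (-1 : F)^(n-k) * (-1)^k = 1 := by
        rw [← pow_add, Nat.sub_add_cancel hk, hne.neg_one_pow]
      have h2 : (-1 : F)^k * (-1)^k = 1 := by
        rw [← pow_add]
        exact Even.neg_one_pow ⟨k, (two_mul k).symm ▸ rfl⟩
      calc (-1 : F)^(n-k) = (-1)^(n-k) * ((-1)^k * (-1)^k) := by rw [h2, mul_one]
        _ = ((-1)^(n-k) * (-1)^k) * (-1)^k := by ring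
        _ = (-1)^k := by rw [h1, one_mul]
    have hchoose : n.choose (n - k) = n.choose k := Nat.choose_symm hk
    have hcast : ((n - k : ℕ) : F) = (n : F) - k := by
      rw [Nat.cast_sub hk]
    have hsub : n - (n - k) = k := Nat.sub_sub_self hk
    have hB : (∑ j ∈ Ioc (n-(n-k)) n, ((j : F))⁻¹^4) - ∑ j ∈ Ioc 0 (n-k), ((j : F))⁻¹^4
        = (∑ j ∈ Ioc (n-k) n, ((j : F))⁻¹^4) - ∑ j ∈ Ioc 0 k, ((j : F))⁻¹^4 := by
      rw [hsub]
      have h1 : (∑ j ∈ Ioc 0 (n-k), ((j : F))⁻¹^4) + ∑ j ∈ Ioc (n-k) n, ((j : F))⁻¹^4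
          = ∑ j ∈ Ioc 0 n, ((j : F))⁻¹^4 :=
        Finset.sum_Ioc_consecutive _ (Nat.zero_le _) (Nat.sub_le n k)
      have h2 : (∑ j ∈ Ioc 0 k, ((j : F))⁻¹^4) + ∑ j ∈ Ioc k n, ((j : F))⁻¹^4
          = ∑ j ∈ Ioc 0 n, ((j : F))⁻¹^4 :=
        Finset.sum_Ioc_consecutive _ (Nat.zero_le _) hk
      linear_combination h2 - h1
    rw [hf]
    simp only
    rw [hsign, hchoose, hcast, hB]
    ring
  have hS : ∑ k ∈ range (n+1), f k = - ∑ k ∈ range (n+1), f k := by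
    conv_lhs => rw [← Finset.sum_range_reflect]
    rw [← Finset.sum_neg_distrib]
    · apply Finset.sum_congr rfl
      intro k hk
      have hk' : k ≤ n := Nat.lt_succ_iff.mp (Finset.mem_range.mp hk)
      simpa using hrefl k hk'
  have h2 : (2 : F) ≠ 0 := by
    have : ((2 : ℕ) : F) ≠ 0 := by
      rw [Ne, ZMod.natCast_eq_zero_iff]
      intro hd
      exact hp2 ((Nat.prime_dvd_prime_iff_eq (Fact.out) Nat.prime_two).mp hd)
    simpa using this
  have h2S : (2 : F) * ∑ k ∈ range (n+1), f k = 0 := by linear_combination hS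
  exact (mul_eq_zero.mp h2S).resolve_left h2

private lemma aux_poch {F : Type*} [CommRing F] (n : ℕ) : ∀ k, k ≤ n →
    (ascPochhammer F k).eval (-(n : F)) = (-1)^k * (n.descFactorial k : F) := by
  intro k
  induction k with
  | zero => intro _; simp
  | succ m ih =>
    intro hm
    have hm' : m ≤ n := Nat.le_of_succ_le hm
    rw [ascPochhammer_succ_eval, ih hm', Nat.descFactorial_succ]
    have hc : ((n - m : ℕ) : F) = (n : F) - m := Nat.cast_sub hm'
    push_cast [hc]
    ring

private lemma aux_reindex {F : Type*} [Field F] (n k : ℕ) (hk : k ≤ n) :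
    ∑ j ∈ range k, (((n - j : ℕ) : F))⁻¹^4 = ∑ j ∈ Ioc (n - k) n, ((j : F))⁻¹^4 := by
  refine Finset.sum_nbij' (i := fun j => n - j) (j := fun m => n - m) ?_ ?_ ?_ ?_ ?_
  · intro a ha
    have ha' : a < k := Finset.mem_range.mp ha
    simp only [Finset.mem_Ioc]
    omega
  · intro m hm
    rw [Finset.mem_Ioc] at hm
    simp only [Finset.mem_range]
    omega
  · intro a ha
    have := Finset.mem_range.mp ha
    omega
  · intro m hm
    rw [Finset.mem_Ioc] at hm
    omega
  · intro a _
    rfl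

end Aux

/-- Lemma 3.2: For `r ≤ 1` odd and coprime with `5`, `p` an odd prime with
`p ≡ 2r (mod 5)` and `p ≥ (5-r)/2`, with `n = (3p-r)/5` and `x = r/5 ∈ ℤ_p`,
`Σ_{k=0}^{n} (10k+r) (r/5)_k⁵/(1)_k⁵ (Σ_{j=0}^{k-1} 1/(r/5+j)⁴ - Σ_{j=1}^{k} 1/j⁴) ≡ 0 (mod p)`. -/
theorem stmt6 (p : ℕ) [Fact p.Prime] (hp : Odd p)
    (r : ℤ) (hr : r ≤ 1) (hrodd : Odd r) (hr5 : IsCoprime r 5)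
    (hpr : (p : ℤ) ≡ 2 * r [ZMOD 5]) (hpge : 5 - r ≤ 2 * (p : ℤ))
    (n : ℕ) (hn : (n : ℤ) * 5 = 3 * p - r)
    (x : PadicInt p) (hx : 5 * x = (r : PadicInt p)) :
    (p : PadicInt p) ∣
      ∑ k ∈ Finset.range (n + 1),
        (10 * (k : PadicInt p) + (r : PadicInt p)) *
          ((ascPochhammer (PadicInt p) k).eval x) ^ 5 *
          (Ring.inverse ((ascPochhammer (PadicInt p) k).eval 1)) ^ 5 *
          ((∑ j ∈ Finset.range k, Ring.inverse (x + (j : PadicInt p)) ^ 4) -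
            ∑ j ∈ Finset.Icc 1 k, Ring.inverse ((j : PadicInt p)) ^ 4) := by
  have hprime : p.Prime := Fact.out
  set F := ZMod p
  set φ := (PadicInt.toZMod : PadicInt p →+* F) with hφ
  -- basic numeric facts
  have hnp : n < p := by omega
  have hne : Even n := by
    obtain ⟨a, ha⟩ := hp
    obtain ⟨b, hb⟩ := hrodd
    have : n % 2 = 0 := by omega
    exact Nat.even_iff.mpr this
  have hp2 : p ≠ 2 := by
    obtain ⟨a, ha⟩ := hp
    omega
  have hp5 : p ≠ 5 := by
    intro h
    subst h
    have hd : (5:ℤ) ∣ 2 * r - (5:ℕ) := hpr.dvd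
    have h5r : (5:ℤ) ∣ r := by omega
    obtain ⟨c, rfl⟩ := h5r
    obtain ⟨u, v, huv⟩ := hr5
    have : (5:ℤ) ∣ 1 := ⟨u * c + v, by linarith⟩
    norm_num at this
  have hcast_ne : ∀ m : ℕ, 0 < m → m < p → ((m : ℕ) : F) ≠ 0 := by
    intro m h1 h2
    rw [Ne, ZMod.natCast_eq_zero_iff]
    intro hd
    exact absurd (Nat.le_of_dvd h1 hd) (not_le.mpr h2)
  have h5F : (5 : F) ≠ 0 := by
    have : ((5:ℕ) : F) ≠ 0 := by
      rw [Ne, ZMod.natCast_eq_zero_iff]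
      intro hd
      exact hp5 ((Nat.prime_dvd_prime_iff_eq hprime (by norm_num)).mp hd)
    simpa using this
  have hrF : ((r : ℤ) : F) = -(5 * (n : F)) := by
    have hr' : (r : ℤ) = 3 * (p:ℤ) - (n:ℤ) * 5 := by linarith
    rw [hr']
    push_cast
    rw [ZMod.natCast_self]
    ring
  have hy : φ x = -(n : F) := by
    have h1 : (5 : F) * φ x = ((r:ℤ) : F) := by
      have := congrArg φ hx
      rw [map_mul, map_intCast, map_ofNat] at this
      exact this
    have h2 : (5 : F) * φ x = (5 : F) * (-(n : F)) := by
      rw [h1, hrF]; ring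
    exact mul_left_cancel₀ h5F h2
  rw [aux_dvd_iff, map_sum]
  refine Eq.trans (Finset.sum_congr rfl ?_) (aux_zmod_sum hp2 n hne)
  intro k hk
  have hk' : k ≤ n := Nat.lt_succ_iff.mp (Finset.mem_range.mp hk)
  have hkfact : ((Nat.factorial k) : F) ≠ 0 := by
    rw [Ne, ZMod.natCast_eq_zero_iff]
    intro hd
    have := (Nat.Prime.dvd_factorial hprime).mp hd
    omega
  have hfZ : φ (((Nat.factorial k) : PadicInt p)) ≠ 0 := by
    rw [map_natCast]; exact hkfact
  have e1 : φ (10 * (k : PadicInt p) + (r : PadicInt p)) = 10 * (k : F) - 5 * (n : F) := by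
    rw [map_add, map_mul, map_natCast, map_intCast, map_ofNat, hrF]
    ring
  have e2 : φ ((ascPochhammer (PadicInt p) k).eval x)
      = (-1)^k * (n.descFactorial k : F) := by
    rw [hφ, aux_eval_map x k, ← hφ, hy, aux_poch n k hk']
  have e3 : φ (Ring.inverse ((ascPochhammer (PadicInt p) k).eval 1)) = ((Nat.factorial k) : F)⁻¹ := by
    rw [ascPochhammer_eval_one, aux_map_inverse _ hfZ, map_natCast]
  have e4 : ∀ j ∈ Finset.range k,
      φ (Ring.inverse (x + (j : PadicInt p)) ^ 4) = (((n - j : ℕ) : F))⁻¹ ^ 4 := by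
    intro j hj
    have hj' : j < k := Finset.mem_range.mp hj
    have hxj : φ (x + (j : PadicInt p)) = -(((n - j : ℕ)) : F) := by
      rw [map_add, hy, map_natCast, Nat.cast_sub (by omega : j ≤ n)]
      ring
    have hne0 : φ (x + (j : PadicInt p)) ≠ 0 := by
      rw [hxj, neg_ne_zero]
      exact hcast_ne (n - j) (by omega) (by omega)
    rw [map_pow, aux_map_inverse _ hne0, hxj, inv_neg, Even.neg_pow (by decide : Even 4)]
  have e5 : ∀ j ∈ Finset.Icc 1 k,
      φ (Ring.inverse ((j : PadicInt p)) ^ 4) = ((j : F))⁻¹ ^ 4 := by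
    intro j hj
    rw [Finset.mem_Icc] at hj
    have hne0 : φ ((j : PadicInt p)) ≠ 0 := by
      rw [map_natCast]
      exact hcast_ne j (by omega) (by omega)
    rw [map_pow, aux_map_inverse _ hne0, map_natCast]
  have e6 : ((-1 : F)^k * (n.descFactorial k : F))^5 * (((Nat.factorial k) : F)⁻¹)^5
      = ((-1)^k * (n.choose k : F))^5 := by
    rw [← mul_pow]
    congr 1
    rw [Nat.descFactorial_eq_factorial_mul_choose]
    push_cast
    erw [Nat.cast_mul]
    linear_combination ((-1 : F)^k * (n.choose k : F)) * mul_inv_cancel₀ hkfact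
  have hIcc : Finset.Icc 1 k = Finset.Ioc 0 k := by
    ext a
    simp only [Finset.mem_Icc, Finset.mem_Ioc]
    omega
  calc φ ((10 * (k : PadicInt p) + (r : PadicInt p)) *
          ((ascPochhammer (PadicInt p) k).eval x) ^ 5 *
          (Ring.inverse ((ascPochhammer (PadicInt p) k).eval 1)) ^ 5 *
          ((∑ j ∈ Finset.range k, Ring.inverse (x + (j : PadicInt p)) ^ 4) -
            ∑ j ∈ Finset.Icc 1 k, Ring.inverse ((j : PadicInt p)) ^ 4))
      = (10 * (k : F) - 5 * (n : F)) * ((-1)^k * (n.descFactorial k : F))^5 *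
          (((Nat.factorial k) : F)⁻¹)^5 *
          ((∑ j ∈ Finset.range k, (((n - j : ℕ) : F))⁻¹ ^ 4) -
            ∑ j ∈ Finset.Icc 1 k, ((j : F))⁻¹ ^ 4) := by
        rw [map_mul, map_mul, map_mul, map_pow, map_pow, map_sub, map_sum, map_sum,
          e1, e2, e3, Finset.sum_congr rfl e4, Finset.sum_congr rfl e5]
    _ = (10 * (k : F) - 5 * n) * ((-1)^k * (n.choose k : F))^5 *
          ((∑ j ∈ Ioc (n-k) n, ((j : F))⁻¹^4) - ∑ j ∈ Ioc 0 k, ((j : F))⁻¹^4) := by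
        rw [mul_assoc (10 * (k : F) - 5 * (n : F)), e6,
          aux_reindex n k hk', hIcc]
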